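/- arXiv:0912.1915 — 5 statements merged into one kernel-verified Lean document; each statement's English description precedes it below -/
import Mathlib

section
/- Let v = (v_1, ..., v_r) be a non-negative, non-increasing integer vector. Then v is GMS if and only if v does not contain a subsequence of consecutive entries of the form (a,a,a), nor a subsequence of consecutive entries (a_i, ..., a_{i+j+1}) with j > 1 such that a_i = a_{i+1}, a_{i+j} = a_{i+j+1}, and a_{i+1}, ..., a_{i+j} are consecutive integers (each entry one less than the previous). -/
/-- `v` (of length `r`, 0-indexed) is GMS: `v i - v j ≥ j - i - 1` for all `i < j < r`. -/
def IsGMS (r : ℕ) (v : ℕ → ℤ) : Prop :=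
  ∀ i j : ℕ, i < j → j < r → v i - v j ≥ (j : ℤ) - (i : ℤ) - 1

/-- `v` contains three consecutive equal entries `(a,a,a)`. -/
def HasTripleRepeat (r : ℕ) (v : ℕ → ℤ) : Prop :=
  ∃ i : ℕ, i + 2 < r ∧ v i = v (i + 1) ∧ v (i + 1) = v (i + 2)

/-- `v` contains a consecutive subsequence `(a_i, …, a_{i+j+1})` with `j > 1`,
`a_i = a_{i+1}`, `a_{i+j} = a_{i+j+1}`, and `a_{i+1}, …, a_{i+j}` consecutive
integers (each one less than the previous). -/
def HasBadPattern (r : ℕ) (v : ℕ → ℤ) : Prop :=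
  ∃ i j : ℕ, 1 < j ∧ i + j + 1 < r ∧ v i = v (i + 1) ∧ v (i + j) = v (i + j + 1) ∧
    ∀ k : ℕ, 1 ≤ k → k < j → v (i + k + 1) = v (i + k) - 1

theorem gms_iff_no_bad_patterns (r : ℕ) (v : ℕ → ℤ)
    (hnonneg : ∀ i, i < r → 0 ≤ v i)
    (hnoninc : ∀ i, i + 1 < r → v (i + 1) ≤ v i) :
    IsGMS r v ↔ ¬ HasTripleRepeat r v ∧ ¬ HasBadPattern r v := by
  classical
  constructor
  · intro hgms
    constructor
    · rintro ⟨i, hi, h1, h2⟩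
      have := hgms i (i + 2) (by omega) hi
      push_cast at this
      omega
    · rintro ⟨i, j, hj, hij, h1, h2, h3⟩
      have chain : ∀ k : ℕ, 1 ≤ k → k ≤ j → v (i + k) = v (i + 1) - ((k : ℤ) - 1) := by
        intro k
        induction k with
        | zero => omega
        | succ n ih =>
          intro _ hk
          rcases Nat.eq_zero_or_pos n with h | h
          · subst h; simp
          · have e1 := ih h (by omega)
            have e2 := h3 n h (by omega)
            have e : i + (n + 1) = i + n + 1 := by omega
            rw [e, e2, e1]
            push_cast
            ring
      have hj' := chain j (by omega) le_rfl
      have := hgms i (i + j + 1) (by omega) hij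
      push_cast at this
      omega
  · rintro ⟨hT, hB⟩ i j hij hjr
    by_contra hlt
    push_neg at hlt
    -- monotonicity
    have mono : ∀ q, q < r → ∀ p, p ≤ q → v q ≤ v p := by
      intro q
      induction q with
      | zero => intro _ p hp; interval_cases p; exact le_rfl
      | succ n ih =>
        intro hnr p hp
        rcases Nat.eq_or_lt_of_le hp with h | h
        · subst h; exact le_rfl
        · exact le_trans (hnoninc n hnr) (ih (by omega) p (by omega))
    have hex : ∃ d, ∃ a, a + d < r ∧ v a - v (a + d) < (d : ℤ) - 1 := by
      refine ⟨j - i, i, by omega, ?_⟩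
      have e : i + (j - i) = j := by omega
      rw [e]
      omega
    obtain ⟨d, ⟨a, har, hav⟩, hdmin⟩ :
        ∃ d, (∃ a, a + d < r ∧ v a - v (a + d) < (d : ℤ) - 1) ∧
          ∀ m, m < d → ¬ ∃ a, a + m < r ∧ v a - v (a + m) < (m : ℤ) - 1 := by
      classical
      exact ⟨Nat.find hex, Nat.find_spec hex, fun m hm => Nat.find_min hex hm⟩
    have hmin : ∀ m, m < d → ∀ b, b + m < r → (m : ℤ) - 1 ≤ v b - v (b + m) := by
      intro m hm b hb
      have := hdmin m hm
      simp only [not_exists, not_and, not_lt] at this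
      exact this b hb
    have hd2 : 2 ≤ d := by
      have h0 : v (a + d) ≤ v a := mono (a + d) har a (by omega)
      omega
    have hdrop0 : ∀ k, k < d → 0 ≤ v (a + k) - v (a + k + 1) := by
      intro k hk
      have := hnoninc (a + k) (by omega)
      omega
    have hdrop1 : ∀ k, k < d → v (a + k) - v (a + k + 1) ≤ 1 := by
      intro k hk
      by_contra hcon
      push_neg at hcon
      rcases Nat.eq_zero_or_pos k with hk0 | hk0
      · subst hk0
        have h1 := hmin (d - 1) (by omega) (a + 1) (by omega)
        have e : a + 1 + (d - 1) = a + d := by omega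
        rw [e] at h1
        simp only [Nat.add_zero] at hcon
        omega
      · rcases Nat.lt_or_ge (k + 1) d with hkd | hkd
        · have h1 := hmin k (by omega) a (by omega)
          have h2 := hmin (d - k - 1) (by omega) (a + k + 1) (by omega)
          have e : a + k + 1 + (d - k - 1) = a + d := by omega
          rw [e] at h2
          omega
        · have hke : k + 1 = d := by omega
          have h1 := hmin k (by omega) a (by omega)
          have e : a + k + 1 = a + d := by omega
          rw [e] at hcon
          omega
    have hsum : ∑ k ∈ Finset.range d, (v (a + k) - v (a + k + 1)) = v a - v (a + d) := by
      have := Finset.sum_range_sub' (f := fun k => v (a + k)) d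
      simpa [add_assoc] using this
    set Z : Finset ℕ := (Finset.range d).filter (fun k => v (a + k) - v (a + k + 1) = 0) with hZ
    have hZsub : Z ⊆ Finset.range d := Finset.filter_subset _ _
    have hZcard : 2 ≤ Z.card := by
      by_contra hc
      push_neg at hc
      have h1 : ∀ k ∈ Finset.range d \ Z, (1 : ℤ) ≤ v (a + k) - v (a + k + 1) := by
        intro k hk
        simp only [hZ, Finset.mem_sdiff, Finset.mem_filter, Finset.mem_range] at hk
        have h0 := hdrop0 k hk.1
        have : ¬ (v (a + k) - v (a + k + 1) = 0) := fun h => hk.2 ⟨hk.1, h⟩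
        omega
      have h2 : ((Finset.range d \ Z).card : ℤ) ≤
          ∑ k ∈ Finset.range d \ Z, (v (a + k) - v (a + k + 1)) := by
        calc ((Finset.range d \ Z).card : ℤ)
            = ∑ _k ∈ Finset.range d \ Z, (1 : ℤ) := by simp
          _ ≤ _ := Finset.sum_le_sum h1
      have h3 : ∑ k ∈ Finset.range d \ Z, (v (a + k) - v (a + k + 1)) ≤
          ∑ k ∈ Finset.range d, (v (a + k) - v (a + k + 1)) := by
        refine Finset.sum_le_sum_of_subset_of_nonneg (Finset.sdiff_subset) ?_
        intro k hk _
        exact hdrop0 k (Finset.mem_range.mp hk)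
      have h4 : (Finset.range d \ Z).card = d - Z.card := by
        rw [Finset.card_sdiff_of_subset hZsub, Finset.card_range]
      have h5 : ((d - Z.card : ℕ) : ℤ) ≤ v a - v (a + d) := by
        rw [← h4, ← hsum]
        exact h2.trans h3
      omega
    obtain ⟨p0, hp0, q0, hq0, hpq0⟩ := Finset.one_lt_card.mp (by omega : 1 < Z.card)
    set p := min p0 q0 with hp
    have hpZ : p ∈ Z := by rcases min_cases p0 q0 with ⟨h, _⟩ | ⟨h, _⟩ <;> rw [hp, h] <;> assumption
    have hqex : ∃ m, p < m ∧ m < d ∧ v (a + m) - v (a + m + 1) = 0 := by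
      refine ⟨max p0 q0, by omega, ?_, ?_⟩
      · rcases max_cases p0 q0 with ⟨h, _⟩ | ⟨h, _⟩ <;> rw [h]
        · exact Finset.mem_range.mp (hZsub hp0)
        · exact Finset.mem_range.mp (hZsub hq0)
      · rcases max_cases p0 q0 with ⟨h, _⟩ | ⟨h, _⟩ <;> rw [h]
        · exact (Finset.mem_filter.mp hp0).2
        · exact (Finset.mem_filter.mp hq0).2
    obtain ⟨q, ⟨hq1, hq2, hq3⟩, hqmin⟩ :
        ∃ q, (p < q ∧ q < d ∧ v (a + q) - v (a + q + 1) = 0) ∧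
          ∀ m, m < q → ¬ (p < m ∧ m < d ∧ v (a + m) - v (a + m + 1) = 0) := by
      classical
      exact ⟨Nat.find hqex, Nat.find_spec hqex, fun m hm => Nat.find_min hqex hm⟩
    have hpd : p < d := Finset.mem_range.mp (hZsub hpZ)
    have hp3 : v (a + p) - v (a + p + 1) = 0 := (Finset.mem_filter.mp hpZ).2
    have hone : ∀ m, p < m → m < q → v (a + m) - v (a + m + 1) = 1 := by
      intro m h1 h2
      have hne := hqmin m h2
      simp only [not_and] at hne
      have := hne h1 (by omega)
      have h0 := hdrop0 m (by omega)
      have hle := hdrop1 m (by omega)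
      omega
    rcases Nat.eq_or_lt_of_le (by omega : p + 1 ≤ q) with hcase | hcase
    · -- triple repeat
      refine hT ⟨a + p, by omega, by omega, ?_⟩
      have h := hq3
      rw [← hcase] at h
      have e1 : a + (p + 1) = a + p + 1 := by omega
      rw [e1] at h
      have e2 : a + p + 1 + 1 = a + p + 2 := by omega
      rw [e2] at h
      omega
    · -- bad pattern
      refine hB ⟨a + p, q - p, by omega, by omega, by omega, ?_, ?_⟩
      · have e1 : a + p + (q - p) = a + q := by omega
        rw [e1]
        omega
      · intro k hk1 hk2
        have h := hone (p + k) (by omega) (by omega)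
        have e : a + (p + k) = a + p + k := by omega
        rw [e] at h
        omega
end

section
/- Let K be a field, R = K[x_0, ..., x_N] the polynomial ring in N+1 variables, and let V be a nonzero K-vector subspace of the space R_t of homogeneous polynomials of degree t ≥ 0. Then the subspace R_1·V of R_{t+1} spanned by all products of a linear form with an element of V satisfies dim_K(R_1·V) ≥ N + dim_K(V). -/
open MvPolynomial

namespace DimR1Aux

variable {K : Type*} [Field K] {N : ℕ}

/-- The leading exponent of a polynomial, w.r.t. the lexicographic order. -/
noncomputable def ld (p : MvPolynomial (Fin (N + 1)) K) : Lex (Fin (N + 1) →₀ ℕ) :=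
  p.support.sup toLex

lemma coeff_ld_ne_zero {p : MvPolynomial (Fin (N + 1)) K} (hp : p ≠ 0) :
    coeff (ofLex (ld p)) p ≠ 0 := by
  have hne : p.support.Nonempty :=
    Finset.nonempty_iff_ne_empty.mpr (fun h => hp (support_eq_empty.mp h))
  obtain ⟨b, hb, heq⟩ := Finset.exists_mem_eq_sup p.support hne toLex
  have : ofLex (ld p) = b := by rw [ld, heq, ofLex_toLex]
  rw [this]
  exact mem_support_iff.mp hb

lemma coeff_eq_zero_of_ld_lt {p : MvPolynomial (Fin (N + 1)) K} {c : Fin (N + 1) →₀ ℕ}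
    (h : ld p < toLex c) : coeff c p = 0 := by
  by_contra h'
  exact absurd (Finset.le_sup (f := toLex) (mem_support_iff.mpr h')) (not_le.mpr h)

lemma ld_monomial_mul {a : Fin (N + 1) →₀ ℕ} {p : MvPolynomial (Fin (N + 1)) K} (hp : p ≠ 0) :
    ld (monomial a 1 * p) = toLex a + ld p := by
  apply le_antisymm
  · apply Finset.sup_le
    intro c hc
    rw [mem_support_iff, coeff_monomial_mul'] at hc
    by_cases hac : a ≤ c
    · rw [if_pos hac, one_mul] at hc
      have h1 : toLex (c - a) ≤ ld p := Finset.le_sup (f := toLex) (mem_support_iff.mpr hc)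
      have h2 : toLex c = toLex a + toLex (c - a) := by
        rw [← toLex_add]
        congr 1
        exact (add_tsub_cancel_of_le hac).symm
      rw [h2]
      exact add_le_add_right h1 _
    · rw [if_neg hac] at hc
      exact absurd rfl hc
  · have h1 : coeff (a + ofLex (ld p)) (monomial a 1 * p) ≠ 0 := by
      rw [coeff_monomial_mul, one_mul]
      exact coeff_ld_ne_zero hp
    have h2 := Finset.le_sup (f := toLex) (mem_support_iff.mpr h1)
    rwa [toLex_add, toLex_ofLex] at h2

lemma card_le_finrank (W : Submodule K (MvPolynomial (Fin (N + 1)) K)) [Module.Finite K W]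
    (T : Finset (Lex (Fin (N + 1) →₀ ℕ)))
    (hT : ∀ l ∈ T, ∃ p, p ∈ W ∧ p ≠ 0 ∧ ld p = l) :
    T.card ≤ Module.finrank K W := by
  classical
  choose f hfW hf0 hfld using hT
  set v : T → W := fun l => ⟨f l l.2, hfW l l.2⟩ with hv
  have hli : LinearIndependent K v := by
    rw [linearIndependent_iff']
    intro t g hsum i hi
    by_contra hgi
    set u := t.filter (fun j => g j ≠ 0) with hu
    have hiu : i ∈ u := Finset.mem_filter.mpr ⟨hi, hgi⟩
    obtain ⟨j₀, hj₀u, hmax⟩ := Finset.exists_max_image u (fun j : T => (j : Lex (Fin (N + 1) →₀ ℕ))) ⟨i, hiu⟩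
    have hj₀t : j₀ ∈ t := (Finset.mem_filter.mp hj₀u).1
    have hgj₀ : g j₀ ≠ 0 := (Finset.mem_filter.mp hj₀u).2
    set c := ofLex (j₀ : Lex (Fin (N + 1) →₀ ℕ)) with hc
    have hzero : ∑ j ∈ t, g j * coeff c (f j j.2) = 0 := by
      have := congrArg (fun w : W => coeff c (w : MvPolynomial (Fin (N + 1)) K)) hsum
      simpa [AddSubmonoidClass.coe_finset_sum, coeff_sum, coeff_smul, smul_eq_mul] using this
    rw [Finset.sum_eq_single j₀] at hzero
    · have hcoeff : coeff c (f j₀ j₀.2) ≠ 0 := by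
        have := coeff_ld_ne_zero (hf0 j₀ j₀.2)
        rwa [hfld j₀ j₀.2] at this
      exact hgj₀ (by
        rcases mul_eq_zero.mp hzero with h | h
        · exact h
        · exact absurd h hcoeff)
    · intro j hj hne
      by_cases hgj : g j = 0
      · rw [hgj, zero_mul]
      · have hju : j ∈ u := Finset.mem_filter.mpr ⟨hj, hgj⟩
        have hle : (j : Lex (Fin (N + 1) →₀ ℕ)) ≤ (j₀ : Lex (Fin (N + 1) →₀ ℕ)) := hmax j hju
        have hne' : (j : Lex (Fin (N + 1) →₀ ℕ)) ≠ (j₀ : Lex (Fin (N + 1) →₀ ℕ)) :=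
          fun h => hne (Subtype.coe_injective h)
        have hlt : ld (f j j.2) < toLex c := by
          rw [hfld j j.2, hc, toLex_ofLex]
          exact lt_of_le_of_ne hle hne'
        rw [coeff_eq_zero_of_ld_lt hlt, mul_zero]
    · intro h
      exact absurd hj₀t h
  have := hli.fintype_card_le_finrank
  rwa [Fintype.card_coe] at this

lemma exists_lead_finset (n : ℕ) :
    ∀ (V : Submodule K (MvPolynomial (Fin (N + 1)) K)) [Module.Finite K V],
      Module.finrank K V = n →
      ∃ T : Finset (Lex (Fin (N + 1) →₀ ℕ)), T.card = n ∧
        ∀ l ∈ T, ∃ p, p ∈ V ∧ p ≠ 0 ∧ ld p = l := by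
  induction n using Nat.strong_induction_on with
  | _ n IH =>
    intro V _ hn
    rcases Nat.eq_zero_or_pos n with h0 | hpos
    · exact ⟨∅, by simp [h0], by simp⟩
    · have hVbot : V ≠ ⊥ := by
        intro h
        rw [h, finrank_bot] at hn
        omega
      obtain ⟨p₀, hp₀V, hp₀⟩ := Submodule.exists_mem_ne_zero_of_ne_bot hVbot
      set c := ofLex (ld p₀) with hcdef
      set V' := V ⊓ LinearMap.ker (lcoeff K c) with hV'
      haveI : Module.Finite K V' := Submodule.finiteDimensional_of_le (inf_le_left : V' ≤ V)
      have hp₀c : coeff c p₀ ≠ 0 := coeff_ld_ne_zero hp₀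
      have hVlt : V' < V := by
        refine lt_of_le_of_ne inf_le_left (fun h => ?_)
        have : p₀ ∈ V' := h ▸ hp₀V
        exact hp₀c (by simpa [lcoeff_apply] using this.2)
      have hlt : Module.finrank K V' < n := hn ▸ Submodule.finrank_lt_finrank_of_lt hVlt
      have hge : n ≤ Module.finrank K V' + 1 := by
        have hrnk := LinearMap.finrank_range_add_finrank_ker ((lcoeff K c).comp V.subtype)
        have hker : Module.finrank K (LinearMap.ker ((lcoeff K c).comp V.subtype))
            = Module.finrank K V' := by
          rw [← Submodule.finrank_map_subtype_eq V, LinearMap.ker_comp,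
            Submodule.map_comap_subtype]
        have hrange : Module.finrank K (LinearMap.range ((lcoeff K c).comp V.subtype)) ≤ 1 := by
          have := Submodule.finrank_le (LinearMap.range ((lcoeff K c).comp V.subtype))
          rwa [Module.finrank_self] at this
        omega
      obtain ⟨T', hT'card, hT'⟩ := IH (Module.finrank K V') hlt V' rfl
      have hnotmem : ld p₀ ∉ T' := by
        intro hmem
        obtain ⟨p, hpV', hp0, hpld⟩ := hT' (ld p₀) hmem
        have : coeff c p ≠ 0 := by
          have := coeff_ld_ne_zero hp0
          rwa [hpld] at this
        exact this (by simpa [lcoeff_apply] using hpV'.2)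
      refine ⟨insert (ld p₀) T', ?_, ?_⟩
      · rw [Finset.card_insert_of_notMem hnotmem, hT'card]
        omega
      · intro l hl
        rcases Finset.mem_insert.mp hl with h | h
        · exact ⟨p₀, hp₀V, hp₀, h.symm⟩
        · obtain ⟨p, hpV', hp0, hpld⟩ := hT' l h
          exact ⟨p, hpV'.1, hp0, hpld⟩

end DimR1Aux

open DimR1Aux in
theorem dim_R1_mul_V_ge (K : Type*) [Field K] (N t : ℕ)
    (V : Submodule K (MvPolynomial (Fin (N + 1)) K))
    (hV : V ≤ homogeneousSubmodule (Fin (N + 1)) K t)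
    (hV0 : V ≠ ⊥) :
    N + Module.finrank K V ≤
      Module.finrank K (homogeneousSubmodule (Fin (N + 1)) K 1 * V : Submodule K (MvPolynomial (Fin (N + 1)) K)) := by
  classical
  have hfd : ∀ s : ℕ, Module.Finite K (homogeneousSubmodule (Fin (N + 1)) K s) := by
    intro s
    refine Submodule.finiteDimensional_of_le (S₂ := restrictTotalDegree (Fin (N + 1)) K s) ?_
    intro p hp
    rw [mem_restrictTotalDegree]
    exact ((mem_homogeneousSubmodule _ _).mp hp).totalDegree_le
  haveI := hfd t
  haveI := hfd (1 + t)
  haveI : Module.Finite K V := Submodule.finiteDimensional_of_le hV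
  set W := homogeneousSubmodule (Fin (N + 1)) K 1 * V with hWdef
  have hWle : W ≤ homogeneousSubmodule (Fin (N + 1)) K (1 + t) :=
    le_trans (mul_le_mul' le_rfl hV) (homogeneousSubmodule_mul 1 t)
  haveI : Module.Finite K W := Submodule.finiteDimensional_of_le hWle
  obtain ⟨T, hTcard, hT⟩ := exists_lead_finset (Module.finrank K V) V rfl
  have hdpos : 0 < Module.finrank K V := by
    rcases Nat.eq_zero_or_pos (Module.finrank K V) with h | h
    · exact absurd (Submodule.finrank_eq_zero.mp h) hV0
    · exact h
  have hTne : T.Nonempty := Finset.card_pos.mp (by omega)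
  set m₀ := T.min' hTne with hm₀
  set e : Fin (N + 1) → (Fin (N + 1) →₀ ℕ) := fun i => Finsupp.single i 1 with he
  set A := T.image (fun l => toLex (e 0) + l) with hA
  set B := (Finset.univ : Finset (Fin (N + 1))).image (fun i => toLex (e i) + m₀) with hB
  -- every element of A ∪ B is a leading exponent of an element of W
  have hwit : ∀ l ∈ A ∪ B, ∃ p, p ∈ W ∧ p ≠ 0 ∧ ld p = l := by
    have key : ∀ (i : Fin (N + 1)) (l' : Lex (Fin (N + 1) →₀ ℕ)), l' ∈ T →
        ∃ p, p ∈ W ∧ p ≠ 0 ∧ ld p = toLex (e i) + l' := by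
      intro i l' hl'
      obtain ⟨p, hpV, hp0, hpld⟩ := hT l' hl'
      refine ⟨X i * p, ?_, mul_ne_zero (X_ne_zero i) hp0, ?_⟩
      · exact Submodule.mul_mem_mul
          ((mem_homogeneousSubmodule _ _).mpr (isHomogeneous_X K i)) hpV
      · have hXi : (X i : MvPolynomial (Fin (N + 1)) K) = monomial (e i) 1 := rfl
        rw [hXi, ld_monomial_mul hp0, hpld]
    intro l hl
    rcases Finset.mem_union.mp hl with h | h
    · obtain ⟨l', hl', rfl⟩ := Finset.mem_image.mp h
      exact key 0 l' hl'
    · obtain ⟨i, _, rfl⟩ := Finset.mem_image.mp h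
      exact key i m₀ (T.min'_mem hTne)
  -- cardinality estimate
  have hAcard : A.card = T.card :=
    Finset.card_image_of_injective _ (add_right_injective _)
  have hBmem : toLex (e 0) + m₀ ∈ B := Finset.mem_image.mpr ⟨0, Finset.mem_univ _, rfl⟩
  set B' := B.erase (toLex (e 0) + m₀) with hB'
  have hBcard : B.card = N + 1 := by
    rw [hB, Finset.card_image_of_injective, Finset.card_univ, Fintype.card_fin]
    intro i j hij
    have := add_right_cancel hij
    have := toLex.injective this
    exact (Finsupp.single_left_injective one_ne_zero) (by simpa [he] using this)
  have hB'card : B'.card = N := by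
    rw [hB', Finset.card_erase_of_mem hBmem, hBcard]
    omega
  have hdisj : Disjoint A B' := by
    rw [Finset.disjoint_left]
    intro x hxA hxB'
    obtain ⟨l, hlT, rfl⟩ := Finset.mem_image.mp hxA
    have hxB := Finset.mem_of_mem_erase hxB'
    have hxne := Finset.ne_of_mem_erase hxB'
    obtain ⟨i, _, heq⟩ := Finset.mem_image.mp hxB
    by_cases hi : i = 0
    · subst hi
      exact hxne (by rw [← heq])
    · have heq' : e i + ofLex m₀ = e 0 + ofLex l := by
        apply toLex.injective
        rw [toLex_add, toLex_add, toLex_ofLex, toLex_ofLex]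
        exact heq
      have h0 : ofLex m₀ 0 = ofLex l 0 + 1 := by
        have := congrArg (fun f : Fin (N + 1) →₀ ℕ => f 0) heq'
        simpa [he, Finsupp.single_apply, hi, add_comm] using this
      have hlm : l < m₀ := by
        rw [Finsupp.Lex.lt_iff]
        exact ⟨0, fun j hj => absurd hj (by simp), by omega⟩
      exact absurd (T.min'_le l hlT) (not_le.mpr hlm)
  have hsub : A ∪ B' ⊆ A ∪ B := Finset.union_subset_union_right (Finset.erase_subset _ _)
  have hcard : T.card + N ≤ (A ∪ B).card := by
    have h1 : (A ∪ B').card = A.card + B'.card := Finset.card_union_of_disjoint hdisj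
    have h2 := Finset.card_le_card hsub
    omega
  have hfin := card_le_finrank W (A ∪ B) hwit
  omega
end

section
/- Let K be a field, R = K[x_0, ..., x_N], and let W_i ⊆ R_1 denote the K-span of x_0, ..., x_i. If V is a nonzero subspace of R_t, then for each 1 ≤ i ≤ N, x_i·V is not contained in W_{i-1}·V; consequently W_0·V ⊊ W_1·V ⊊ ... ⊊ W_N·V = R_1·V is a strictly increasing chain of subspaces. -/
open MvPolynomial

/-- `W K N i` is the span of the variables `x_0, …, x_i` in `K[x_0, …, x_N]`. -/
noncomputable def W (K : Type*) [Field K] (N i : ℕ) : Submodule K (MvPolynomial (Fin (N + 1)) K) :=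
  Submodule.span K {p | ∃ k : Fin (N + 1), (k : ℕ) ≤ i ∧ p = X k}

/-- Weight of an exponent vector: base-`t+2` valuation. -/
noncomputable def wt (N t : ℕ) (d : Fin (N + 1) →₀ ℕ) : ℕ :=
  d.sum (fun k n => n * (t + 2) ^ (k : ℕ))

lemma wt_add (N t : ℕ) (d e : Fin (N + 1) →₀ ℕ) :
    wt N t (d + e) = wt N t d + wt N t e :=
  Finsupp.sum_add_index' (fun _ => by simp) (fun k m n => add_mul m n _)

lemma wt_single (N t : ℕ) (j : Fin (N + 1)) :
    wt N t (Finsupp.single j 1) = (t + 2) ^ (j : ℕ) := by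
  rw [wt, Finsupp.sum_single_index] <;> simp

lemma wt_le (N t : ℕ) (d : Fin (N + 1) →₀ ℕ) (hd : d.degree = t) :
    wt N t d ≤ t * (t + 2) ^ N := by
  calc wt N t d = ∑ k ∈ d.support, d k * (t + 2) ^ (k : ℕ) := rfl
    _ ≤ ∑ k ∈ d.support, d k * (t + 2) ^ N := by
        refine Finset.sum_le_sum fun k _ => ?_
        exact Nat.mul_le_mul_left _ (Nat.pow_le_pow_right (by omega) (by omega))
    _ = (∑ k ∈ d.support, d k) * (t + 2) ^ N := by rw [Finset.sum_mul]
    _ = t * (t + 2) ^ N := by rw [← Finsupp.degree_apply, hd]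

lemma degree_one_eq_single {σ : Type*} (d : σ →₀ ℕ) (h : d.degree = 1) :
    ∃ k, d = Finsupp.single k 1 := by
  have hd0 : d ≠ 0 := by
    intro h0; rw [h0, map_zero] at h; omega
  obtain ⟨k, hk⟩ : ∃ k, d k ≠ 0 := by
    by_contra hc; push_neg at hc
    exact hd0 (Finsupp.ext fun i => hc i)
  refine ⟨k, Finsupp.ext fun j => ?_⟩
  classical
  by_cases hj : j = k
  · subst hj
    have h1 : d j ≤ 1 := h ▸ Finsupp.le_degree j d
    simp only [Finsupp.single_eq_same]
    omega
  · rw [Finsupp.single_eq_of_ne' (Ne.symm hj)]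
    by_contra hdj
    have hjs : j ∈ d.support := Finsupp.mem_support_iff.mpr hdj
    have hks : k ∈ d.support := Finsupp.mem_support_iff.mpr hk
    have hsub : ({j, k} : Finset σ) ⊆ d.support := by
      intro x hx
      rcases Finset.mem_insert.mp hx with rfl | hx
      · exact hjs
      · rwa [Finset.mem_singleton.mp hx]
    have h2 : d j + d k ≤ d.degree := by
      rw [Finsupp.degree_apply, ← Finset.sum_pair hj]
      exact Finset.sum_le_sum_of_subset hsub
    omega

theorem xi_mul_V_not_le_and_strict_chain (K : Type*) [Field K] (N t : ℕ)
    (V : Submodule K (MvPolynomial (Fin (N + 1)) K))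
    (hV : V ≤ homogeneousSubmodule (Fin (N + 1)) K t)
    (hV0 : V ≠ ⊥) :
    (∀ i : Fin (N + 1), 1 ≤ (i : ℕ) →
      ¬ (Submodule.span K {X i} * V ≤ W K N ((i : ℕ) - 1) * V)) ∧
    (∀ i : ℕ, 1 ≤ i → i ≤ N → W K N (i - 1) * V < W K N i * V) ∧
    W K N N * V = homogeneousSubmodule (Fin (N + 1)) K 1 * V := by
  classical
  -- degrees of monomials appearing in V
  have hdeg : ∀ u ∈ V, ∀ d : Fin (N + 1) →₀ ℕ, coeff d u ≠ 0 → d.degree = t := by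
    intro u hu d hd
    by_contra hne
    exact hd (((mem_homogeneousSubmodule _ _).mp (hV hu)).coeff_eq_zero hne)
  -- choose a monomial of maximal weight appearing in V
  obtain ⟨m, v, hvV, hmv, hmax⟩ : ∃ (m : Fin (N + 1) →₀ ℕ)
      (v : MvPolynomial (Fin (N + 1)) K), v ∈ V ∧ coeff m v ≠ 0 ∧
      ∀ d : Fin (N + 1) →₀ ℕ, (∃ u ∈ V, coeff d u ≠ 0) → wt N t d ≤ wt N t m := by
    set S : Set ℕ := (wt N t) '' {d | ∃ u ∈ V, coeff d u ≠ 0} with hS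
    have hSne : S.Nonempty := by
      obtain ⟨v, hvV, hv0⟩ := Submodule.exists_mem_ne_zero_of_ne_bot hV0
      obtain ⟨d, hd⟩ := MvPolynomial.ne_zero_iff.mp hv0
      exact ⟨wt N t d, d, ⟨v, hvV, hd⟩, rfl⟩
    have hSbdd : BddAbove S := by
      refine ⟨t * (t + 2) ^ N, fun n hn => ?_⟩
      obtain ⟨d, ⟨u, huV, hd⟩, rfl⟩ := hn
      exact wt_le N t d (hdeg u huV d hd)
    obtain ⟨d, ⟨u, huV, hd⟩, hdS⟩ := Nat.sSup_mem hSne hSbdd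
    exact ⟨d, u, huV, hd, fun d' hd' => hdS ▸ le_csSup hSbdd ⟨d', hd', rfl⟩⟩
  -- key vanishing lemma
  have hkey : ∀ (i : Fin (N + 1)), 1 ≤ (i : ℕ) →
      ∀ p ∈ W K N ((i : ℕ) - 1) * V, coeff (Finsupp.single i 1 + m) p = 0 := by
    intro i hi p hp
    refine Submodule.mul_induction_on hp ?_ ?_
    · intro a ha b hb
      refine Submodule.span_induction ?_ ?_ ?_ ?_ ha
      · rintro x ⟨j, hj, rfl⟩
        rw [coeff_X_mul']
        split_ifs with hmem
        · by_contra hc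
          have hle := hmax _ ⟨b, hb, hc⟩
          have hej : (Finsupp.single i 1 + m : Fin (N + 1) →₀ ℕ) j ≠ 0 := Finsupp.mem_support_iff.mp hmem
          have heq : (Finsupp.single i 1 + m) - Finsupp.single j 1 + Finsupp.single j 1
              = Finsupp.single i 1 + m := by
            ext k
            by_cases hk : k = j
            · subst hk
              simp only [Finsupp.add_apply, Finsupp.tsub_apply, Finsupp.single_eq_same]
              simp only [Finsupp.add_apply] at hej
              omega
            · simp [Finsupp.single_eq_of_ne' (Ne.symm hk)]
          have hw := congrArg (wt N t) heq
          rw [wt_add, wt_single, wt_add, wt_single] at hw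
          have hji : (j : ℕ) < (i : ℕ) := by omega
          have hpow : (t + 2) ^ (j : ℕ) < (t + 2) ^ (i : ℕ) :=
            Nat.pow_lt_pow_right (by omega) hji
          omega
        · rfl
      · simp
      · intro x y _ _ hx hy
        rw [add_mul, coeff_add, hx, hy, add_zero]
      · intro r x _ hx
        rw [smul_mul_assoc, coeff_smul, hx, smul_zero]
    · intro x y hx hy
      rw [coeff_add, hx, hy, add_zero]
  -- part 1
  have part1 : ∀ i : Fin (N + 1), 1 ≤ (i : ℕ) →
      ¬ (Submodule.span K {X i} * V ≤ W K N ((i : ℕ) - 1) * V) := by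
    intro i hi hle
    have hxmem : (X i : MvPolynomial (Fin (N + 1)) K) * v ∈ Submodule.span K {X i} * V :=
      Submodule.mul_mem_mul (Submodule.mem_span_singleton_self _) hvV
    have h0 := hkey i hi _ (hle hxmem)
    rw [coeff_X_mul] at h0
    exact hmv h0
  refine ⟨part1, ?_, ?_⟩
  -- part 2
  · intro i h1 hN
    set i' : Fin (N + 1) := ⟨i, by omega⟩ with hi'
    have hval : (i' : ℕ) = i := rfl
    have hWle : W K N (i - 1) ≤ W K N i := by
      apply Submodule.span_mono
      rintro p ⟨k, hk, rfl⟩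
      exact ⟨k, by omega, rfl⟩
    have hXle : Submodule.span K {(X i' : MvPolynomial (Fin (N + 1)) K)} ≤ W K N i := by
      rw [Submodule.span_le]
      rintro p rfl
      exact Submodule.subset_span ⟨i', by rw [hval], rfl⟩
    have hnot := part1 i' (by rw [hval]; omega)
    rw [hval] at hnot
    rw [SetLike.lt_iff_le_and_exists]
    refine ⟨mul_le_mul' hWle le_rfl, ?_⟩
    rw [SetLike.le_def] at hnot
    push_neg at hnot
    obtain ⟨x, hx1, hx2⟩ := hnot
    exact ⟨x, mul_le_mul' hXle le_rfl hx1, hx2⟩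
  -- part 3
  · suffices h : W K N N = homogeneousSubmodule (Fin (N + 1)) K 1 by rw [h]
    apply le_antisymm
    · rw [W, Submodule.span_le]
      rintro p ⟨k, _, rfl⟩
      exact (mem_homogeneousSubmodule _ _).mpr (isHomogeneous_X K k)
    · intro p hp
      have hph : p.IsHomogeneous 1 := (mem_homogeneousSubmodule _ _).mp hp
      rw [← support_sum_monomial_coeff p]
      refine Submodule.sum_mem _ fun d hd => ?_
      have hdeg1 : d.degree = 1 := by
        by_contra hne
        exact (mem_support_iff.mp hd) (hph.coeff_eq_zero hne)
      obtain ⟨k, rfl⟩ := degree_one_eq_single d hdeg1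
      have hmon : (monomial (Finsupp.single k 1) (coeff (Finsupp.single k 1) p)
          : MvPolynomial (Fin (N + 1)) K)
          = coeff (Finsupp.single k 1) p • X k := by
        rw [X, smul_monomial, smul_eq_mul, mul_one]
      rw [hmon]
      exact Submodule.smul_mem _ _ (Submodule.subset_span ⟨k, by omega, rfl⟩)
end

section
/- For any non-negative integer vector v = (v_1, ..., v_{n+1}) and any integer t ≥ 0, f_v(t) ≤ F_v(t), where f_v(t) = Σ_{i=0}^{n} binom(min(t-i+1, v_{i+1}), 1) and F_v(t) = min over 0 ≤ i ≤ n+1 of ( binom(t+2, 2) - binom(t-i+2, 2) + Σ_{j=i+1}^{n+1} v_j ). -/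
/-- Extended binomial coefficient `binom(x,1) = max x 0`. -/
def binom1 (x : ℤ) : ℤ := max x 0

/-- Extended binomial coefficient `binom(x,2) = x(x-1)/2` for `x ≥ 0`, else `0`. -/
def binom2 (x : ℤ) : ℤ := if 0 ≤ x then x * (x - 1) / 2 else 0

/-- `f_v(t)` for a vector `v = (v_1, …, v_{n+1})` given 0-indexed by `v : ℕ → ℤ`. -/
def fLow (n : ℕ) (v : ℕ → ℤ) (t : ℤ) : ℤ :=
  ∑ i ∈ Finset.range (n + 1), binom1 (min (t - i + 1) (v i))

/-- `F_v(t)` for a vector `v = (v_1, …, v_{n+1})` given 0-indexed by `v : ℕ → ℤ`. -/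
def FUpp (n : ℕ) (v : ℕ → ℤ) (t : ℤ) : ℤ :=
  Finset.inf' (Finset.range (n + 2)) (by simp) fun i =>
    binom2 (t + 2) - binom2 (t - i + 2) + ∑ j ∈ Finset.Ico i (n + 1), v j

lemma binom2_succ (x : ℤ) (hx : 0 ≤ x) : binom2 (x + 1) = binom2 x + x := by
  unfold binom2
  rw [if_pos (by omega : (0:ℤ) ≤ x + 1), if_pos hx]
  obtain ⟨k, hk⟩ := Int.even_mul_succ_self (x - 1)
  have h1 : x * (x - 1) = 2 * k := by linarith [hk]
  have h2 : (x + 1) * (x + 1 - 1) = 2 * (k + x) := by linear_combination h1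
  rw [h1, h2]
  omega

lemma binom2_nonpos (z : ℤ) (h : z ≤ 0) : binom2 z = 0 := by
  unfold binom2
  split_ifs with h'
  · have : z = 0 := le_antisymm h h'
    subst this; norm_num
  · rfl

lemma key (t : ℤ) (ht : 0 ≤ t) : ∀ i : ℕ,
    binom2 (t - i + 2) + ∑ j ∈ Finset.range i, binom1 (t - j + 1) = binom2 (t + 2) := by
  intro i
  induction i with
  | zero => simp
  | succ i ih =>
    rw [Finset.sum_range_succ, ← ih]
    push_cast
    have hx : t - i + 2 = (t - i + 1) + 1 := by ring
    set x : ℤ := t - i + 1 with hxdef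
    have h1 : t - (i + 1 : ℤ) + 2 = x := by rw [hxdef]; ring
    rw [h1, hx]
    rcases le_or_gt 0 x with h | h
    · have : binom1 x = x := by simp [binom1, h]
      rw [this, binom2_succ x h]; ring
    · have hb1 : binom1 x = 0 := by simp [binom1]; omega
      rw [hb1, binom2_nonpos x (by omega), binom2_nonpos (x + 1) (by omega)]
      ring

theorem fLow_le_FUpp (n : ℕ) (v : ℕ → ℤ) (t : ℤ) (ht : 0 ≤ t)
    (hnonneg : ∀ i, i ≤ n → 0 ≤ v i) :
    fLow n v t ≤ FUpp n v t := by
  unfold FUpp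
  apply Finset.le_inf'
  intro i hi
  have hile : i ≤ n + 1 := by simpa [Nat.lt_succ_iff] using hi
  unfold fLow
  rw [Finset.range_eq_Ico, ← Finset.sum_Ico_consecutive _ (Nat.zero_le i) hile]
  have hA : ∑ j ∈ Finset.Ico 0 i, binom1 (min (t - j + 1) (v j)) ≤
      binom2 (t + 2) - binom2 (t - i + 2) := by
    have := key t ht i
    rw [← Finset.range_eq_Ico]
    have hle : ∑ j ∈ Finset.range i, binom1 (min (t - j + 1) (v j)) ≤
        ∑ j ∈ Finset.range i, binom1 (t - j + 1) := by
      apply Finset.sum_le_sum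
      intro j hj
      simp only [binom1]
      omega
    omega
  have hB : ∑ j ∈ Finset.Ico i (n + 1), binom1 (min (t - j + 1) (v j)) ≤
      ∑ j ∈ Finset.Ico i (n + 1), v j := by
    apply Finset.sum_le_sum
    intro j hj
    have hj' : j ≤ n := by
      simp only [Finset.mem_Ico] at hj; omega
    have := hnonneg j hj'
    simp only [binom1]
    omega
  omega
end

section
/- Let m_1 ≥ m_2 > 2 be integers and a_1, a_2 positive integers. Then the vector (a_1, a_2) * (m_1, m_2) is GMS. -/
lemma ediv_superadd (a b m : ℤ) (hm : 0 < m) : a/m + b/m ≤ (a+b)/m := by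
  rw [Int.le_ediv_iff_mul_le hm, add_mul]
  have h1 := Int.ediv_mul_le a (ne_of_gt hm)
  have h2 := Int.ediv_mul_le b (ne_of_gt hm)
  omega

lemma ediv_le_ediv_three (s m : ℤ) (hs : 0 ≤ s) (hm : 3 ≤ m) : s/m ≤ s/3 := by
  rw [Int.le_ediv_iff_mul_le (by norm_num)]
  calc s/m*3 ≤ s/m*m := by
        have : 0 ≤ s/m := Int.ediv_nonneg hs (by omega)
        nlinarith
    _ ≤ s := Int.ediv_mul_le s (by omega)

lemma countP_block_le (a m lo hi : ℤ) (hm : 0 < m) (hlohi : lo ≤ hi) (n : ℕ) :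
    (((List.range n).map (fun k : ℕ => (a - (k:ℤ)) * m)).countP
      (fun x => decide (lo ≤ x ∧ x ≤ hi)) : ℤ) ≤ (hi - lo) / m + 1 := by
  rw [List.countP_map]
  have hq : ∀ q : ℕ → Bool, (List.range n).countP q
      = ((Finset.range n).filter (fun k => q k)).card := by
    intro q
    simp [List.countP_eq_length_filter, Finset.filter, Finset.range, Multiset.range]
  rw [hq]
  set A : ℤ := -((-lo)/m)
  set B : ℤ := hi/m
  have hcard : ((Finset.range n).filter
      (fun k => ((fun x => decide (lo ≤ x ∧ x ≤ hi)) ∘ (fun k : ℕ => (a - (k:ℤ)) * m)) k)).card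
      ≤ (Finset.Icc A B).card := by
    refine Finset.card_le_card_of_injOn (fun k => a - (k:ℤ)) ?_ ?_
    · intro k hk
      simp only [Finset.mem_coe, Finset.mem_filter, Function.comp, decide_eq_true_eq] at hk
      obtain ⟨-, h1, h2⟩ := hk
      rw [Finset.mem_coe, Finset.mem_Icc]
      constructor
      · have : -(a - (k:ℤ)) ≤ (-lo)/m := by
          rw [Int.le_ediv_iff_mul_le hm]; linarith
        simp only [A]; omega
      · rw [Int.le_ediv_iff_mul_le hm]; exact h2
    · intro x _ y _ h
      simp only at h
      have : (x:ℤ) = y := by linarith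
      exact_mod_cast this
  have hicc : (Finset.Icc A B).card = (B + 1 - A).toNat := Int.card_Icc A B
  have hAB : B + (-lo)/m ≤ (hi - lo)/m := by
    have := ediv_superadd hi (-lo) m hm
    simpa [B, sub_eq_add_neg] using this
  have hnn : 0 ≤ (hi - lo)/m := Int.ediv_nonneg (by omega) (by omega)
  have h1 : ((Finset.range n).filter
      (fun k => ((fun x => decide (lo ≤ x ∧ x ≤ hi)) ∘ (fun k : ℕ => (a - (k:ℤ)) * m)) k)).card
      ≤ (B + 1 - A).toNat := hicc ▸ hcard
  have h2 := (Int.ofNat_le.mpr h1)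
  simp only [A] at *
  omega



/-- `a ∘ m`: concatenation over `i` of the sequences `(a_i m_i, (a_i-1) m_i, …, m_i)`. -/
def circOp (a m : List ℤ) : List ℤ :=
  (a.zip m).flatMap fun p => (List.range p.1.toNat).map fun k => (p.1 - k) * p.2

/-- `w` is `a * m`, i.e. the non-increasing rearrangement of `a ∘ m`. -/
def IsStar (a m w : List ℤ) : Prop :=
  (circOp a m).Perm w ∧ w.Chain' (· ≥ ·)

/-- A list `w = (w_1, …, w_r)` is GMS: `w_i - w_j ≥ j - i - 1` for all `i < j`. -/
def IsGMSList (w : List ℤ) : Prop :=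
  ∀ i j : ℕ, i < j → j < w.length → w.getD i 0 - w.getD j 0 ≥ (j : ℤ) - (i : ℤ) - 1

theorem star_two_lines_gms (a₁ a₂ m₁ m₂ : ℤ)
    (ha₁ : 0 < a₁) (ha₂ : 0 < a₂) (hm : m₂ ≤ m₁) (hm₂ : 2 < m₂) :
    ∀ w : List ℤ, IsStar [a₁, a₂] [m₁, m₂] w → IsGMSList w := by
  rintro w ⟨hperm, hchain⟩ i j hij hj
  have hi : i < w.length := lt_trans hij hj
  have hpair : w.Pairwise (· ≥ ·) := List.isChain_iff_pairwise.mp hchain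
  have hsort : ∀ p q : ℕ, (hp : p < w.length) → (hq : q < w.length) → p ≤ q →
      w[q] ≤ w[p] := by
    intro p q hp hq hpq
    rcases eq_or_lt_of_le hpq with h | h
    · subst h; exact le_refl _
    · exact List.pairwise_iff_getElem.mp hpair p q hp hq h
  set lo := w[j] with hlo
  set hi' := w[i] with hhi
  have hlohi : lo ≤ hi' := hsort i j hi hj (le_of_lt hij)
  set P : ℤ → Bool := fun x => decide (lo ≤ x ∧ x ≤ hi') with hP
  -- the infix
  set t := (w.drop i).take (j - i + 1) with ht
  have htlen : t.length = j - i + 1 := by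
    simp [ht, List.length_take, List.length_drop]; omega
  have htsub : t.Sublist w := by
    have h1 : t.Sublist (w.drop i) := List.take_sublist _ _
    exact h1.trans (List.drop_sublist _ _)
  have hall : ∀ x ∈ t, P x := by
    intro x hx
    obtain ⟨r, hr, hxr⟩ := List.mem_iff_getElem.mp hx
    have hr' : r < j - i + 1 := htlen ▸ hr
    have hgt : t[r] = w[i + r]'(by omega) := by
      simp [ht, List.getElem_take, List.getElem_drop]
    have h1 : w[i + r]'(by omega) ≤ hi' := hsort i (i+r) hi (by omega) (by omega)
    have h2 : lo ≤ w[i + r]'(by omega) := hsort (i+r) j (by omega) hj (by omega)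
    rw [← hxr, hgt, hP]
    simp only [decide_eq_true_eq]
    exact ⟨h2, h1⟩
  have hcount1 : t.length = t.countP P := (List.countP_eq_length (p := P)).mpr hall |>.symm
  have hcount2 : t.countP P ≤ w.countP P := htsub.countP_le (p := P)
  have hcount3 : w.countP P = (circOp [a₁, a₂] [m₁, m₂]).countP P := (hperm.countP_eq P).symm
  -- compute circOp
  have hcirc : circOp [a₁, a₂] [m₁, m₂] =
      ((List.range a₁.toNat).map fun k : ℕ => (a₁ - (k:ℤ)) * m₁) ++
      ((List.range a₂.toNat).map fun k : ℕ => (a₂ - (k:ℤ)) * m₂) := by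
    simp only [circOp, List.zip_cons_cons, List.zip_nil_right, List.zip_nil_left,
      List.flatMap_cons, List.flatMap_nil, List.append_nil]
    have hfm : ∀ (f : ℕ → ℤ) (l : List ℕ), (l.flatMap fun a => [f a]) = l.map f := by
      intro f l; induction l with
      | nil => simp
      | cons x xs ih => simp [ih]
    simp only [List.pure_def, List.bind_eq_flatMap, hfm, List.map_map]
    rfl
  have hm₁3 : (3:ℤ) ≤ m₁ := by omega
  have hm₂3 : (3:ℤ) ≤ m₂ := by omega
  have hb1 := countP_block_le a₁ m₁ lo hi' (by omega) hlohi a₁.toNat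
  have hb2 := countP_block_le a₂ m₂ lo hi' (by omega) hlohi a₂.toNat
  have hcount4 : (circOp [a₁, a₂] [m₁, m₂]).countP P =
      ((List.range a₁.toNat).map fun k : ℕ => (a₁ - (k:ℤ)) * m₁).countP P +
      ((List.range a₂.toNat).map fun k : ℕ => (a₂ - (k:ℤ)) * m₂).countP P := by
    rw [hcirc, List.countP_append]
  have hnat : (j - i + 1 : ℕ) ≤
      ((List.range a₁.toNat).map fun k : ℕ => (a₁ - (k:ℤ)) * m₁).countP P +
      ((List.range a₂.toNat).map fun k : ℕ => (a₂ - (k:ℤ)) * m₂).countP P := by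
    rw [← hcount4, ← hcount3]; omega
  set s' := hi' - lo with hs'
  have hkey : (j:ℤ) - i + 1 ≤ s'/m₁ + s'/m₂ + 2 := by
    have h0 : ((j - i + 1 : ℕ) : ℤ) ≤ s'/m₁ + s'/m₂ + 2 := by
      calc ((j - i + 1 : ℕ) : ℤ)
          ≤ ((((List.range a₁.toNat).map fun k : ℕ => (a₁ - (k:ℤ)) * m₁).countP P +
             ((List.range a₂.toNat).map fun k : ℕ => (a₂ - (k:ℤ)) * m₂).countP P : ℕ) : ℤ) := by
            exact_mod_cast hnat
        _ ≤ s'/m₁ + s'/m₂ + 2 := by rw [← hP] at hb1 hb2; push_cast; linarith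
    have : ((j - i + 1 : ℕ) : ℤ) = (j:ℤ) - i + 1 := by
      push_cast [Nat.cast_sub hij.le]; ring
    linarith [h0, this.ge, this.le]
  have d1 : s'/m₁ ≤ s'/3 := ediv_le_ediv_three s' m₁ (by omega) hm₁3
  have d2 : s'/m₂ ≤ s'/3 := ediv_le_ediv_three s' m₂ (by omega) hm₂3
  have h5 : (j:ℤ) - i - 1 ≤ 2*(s'/3) := by linarith
  have h6 : 2*(s'/3) ≤ s' := by omega
  rw [List.getD_eq_getElem w 0 hi, List.getD_eq_getElem w 0 hj]
  show (j:ℤ) - i - 1 ≤ w[i] - w[j]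
  rw [← hhi, ← hlo, ← hs']
  linarith
end
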